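/- Let S be a set of finite words over a finite alphabet A closed under taking subwords, S_n = S ∩ A^n, and Y(S) = {y ∈ A^ℤ : for all k, y([-k,k]) is a subword of some word in S}. Then limsup_{n→∞} (1/n) ln |S_n| = h(Y(S)), the topological entropy of the subshift Y(S). -/

import Mathlib

open Filter Topology MeasureTheory

variable {A : Type*}

/-- The left shift on bi-infinite sequences. -/
def shift (x : ℤ → A) : ℤ → A := fun n => x (n + 1)

/-- The word `x([i, i+n))` read off from a point `x`. -/
def wordAt (x : ℤ → A) (i : ℤ) (n : ℕ) : List A :=
  (List.range n).map fun j => x (i + j)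

/-- A subshift: a closed, shift-invariant subset of the full shift. -/
def IsSubshift [TopologicalSpace A] (X : Set (ℤ → A)) : Prop :=
  IsClosed X ∧ ∀ x ∈ X, shift x ∈ X

/-- The set of words of length `n` appearing in points of `X`. -/
def language (X : Set (ℤ → A)) (n : ℕ) : Set (List A) :=
  {w | ∃ x ∈ X, ∃ i : ℤ, wordAt x i n = w}

/-- Topological entropy of a subshift, as a limsup. -/
noncomputable def entropy (X : Set (ℤ → A)) : ℝ :=
  Filter.limsup (fun n : ℕ => Real.log ((language X n).ncard) / n) Filter.atTop

/-- The set `C_n` of code words of length `n`. -/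
def Cwords (C : Set (List A)) (n : ℕ) : Set (List A) := {w ∈ C | w.length = n}

/-- The generating function `f_C(α) = ∑_{j ≥ 1} |C_j| e^{-jα}`, valued in `[0, ∞]`. -/
noncomputable def fC (C : Set (List A)) (α : ℝ) : ENNReal :=
  ∑' n : ℕ, ((Cwords C (n + 1)).ncard : ENNReal) *
    ENNReal.ofReal (Real.exp (-((n : ℝ) + 1) * α))

/-- The set `B_C` of bi-infinite concatenations of code words. -/
def Bset (C : Set (List A)) : Set (ℤ → A) :=
  {x | ∃ s : ℤ → ℤ, StrictMono s ∧ Tendsto s atTop atTop ∧ Tendsto s atBot atBot ∧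
    ∀ k : ℤ, wordAt x (s k) (s (k + 1) - s k).toNat ∈ C}

/-- The set `L_C` of limits of single code words. -/
def Lset (C : Set (List A)) : Set (ℤ → A) :=
  {x | ∀ k : ℕ, ∃ w ∈ C, wordAt x (-(k : ℤ)) (2 * k + 1) <:+: w}

/-- The coded subshift `X_C`, the closure of `B_C`. -/
def Xset [TopologicalSpace A] (C : Set (List A)) : Set (ℤ → A) := closure (Bset C)

/-- `C` has unique decomposition: no finite word is a concatenation of `C`-words
in two different ways. -/
def UniqueDecomposition (C : Set (List A)) : Prop :=
  ∀ l l' : List (List A), (∀ w ∈ l, w ∈ C) → (∀ w ∈ l', w ∈ C) →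
    l.flatten = l'.flatten → l = l'

/-- `n`-letter prefixes of words in `C`. -/
def Pn (C : Set (List A)) (n : ℕ) : Set (List A) :=
  {w | w.length = n ∧ ∃ v ∈ C, w <+: v}

/-- `n`-letter suffixes of words in `C`. -/
def Sn (C : Set (List A)) (n : ℕ) : Set (List A) :=
  {w | w.length = n ∧ ∃ v ∈ C, w <:+ v}

/-- `n`-letter subwords of words in `C`. -/
def Wn (C : Set (List A)) (n : ℕ) : Set (List A) :=
  {w | w.length = n ∧ ∃ v ∈ C, w <:+: v}

/-- The measure of the cylinder set of a word. -/
noncomputable def cylMeasure [MeasurableSpace A] (μ : Measure (ℤ → A)) (w : List A) : ℝ :=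
  (μ {x : ℤ → A | wordAt x 0 w.length = w}).toReal

/-- Measure-theoretic (Kolmogorov–Sinai) entropy of a shift-invariant measure. -/
noncomputable def measEntropy [MeasurableSpace A] [Fintype A] [DecidableEq A]
    (μ : Measure (ℤ → A)) : ℝ :=
  Filter.limsup (fun n : ℕ =>
    (-1 / (n : ℝ)) * ∑ w : Fin n → A,
      cylMeasure μ (List.ofFn w) * Real.log (cylMeasure μ (List.ofFn w))) Filter.atTop

namespace Stmt4Aux

lemma wordAt_eq (x : ℤ → A) (i : ℤ) (n : ℕ) :
    wordAt x i n = (List.range n).map (fun j : ℕ => x (i + (j : ℤ))) := by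
  show (((List.range n : List ℕ) : List ℤ)).map _ = _
  have : ((List.range n : List ℕ) : List ℤ) = (List.range n).map (fun j : ℕ => (j : ℤ)) := by
    show (List.range n).flatMap _ = _
    rw [← List.flatMap_pure_eq_map]
    rfl
  rw [this, List.map_map]
  rfl

lemma wordAt_length (x : ℤ → A) (i : ℤ) (n : ℕ) : (wordAt x i n).length = n := by
  simp [wordAt_eq]

lemma wordAt_getElem (x : ℤ → A) (i : ℤ) (n t : ℕ) (ht : t < n) :
    (wordAt x i n)[t]'(by simp [wordAt_length, ht]) = x (i + t) := by
  simp [wordAt_eq]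

lemma wordAt_add (x : ℤ → A) (i : ℤ) (m n : ℕ) :
    wordAt x i (m + n) = wordAt x i m ++ wordAt x (i + m) n := by
  simp only [wordAt_eq, List.range_add, List.map_append, List.map_map]
  congr 1
  apply List.map_congr_left
  intro j _
  simp only [Function.comp_apply]
  congr 1
  push_cast; ring

lemma wordAt_succ_left (x : ℤ → A) (i : ℤ) (n : ℕ) :
    wordAt x i (n + 1) = x i :: wordAt x (i + 1) n := by
  simp only [wordAt_eq, List.range_succ_eq_map, List.map_cons, List.map_map]
  congr 1
  · simp
  · apply List.map_congr_left
    intro j _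
    simp only [Function.comp_apply]
    congr 1
    push_cast [Nat.succ_eq_add_one]; ring

lemma wordAt_succ_right (x : ℤ → A) (i : ℤ) (n : ℕ) :
    wordAt x i (n + 1) = wordAt x i n ++ [x (i + n)] := by
  rw [wordAt_add]
  congr 1
  simp [wordAt_eq, List.range_succ]

lemma wordAt_prefix (x : ℤ → A) (i : ℤ) {m M : ℕ} (h : m ≤ M) :
    wordAt x i m <+: wordAt x i M := by
  refine ⟨wordAt x (i + m) (M - m), ?_⟩
  rw [← wordAt_add]
  congr 1
  omega

lemma wordAt_infix (x : ℤ → A) {i j : ℤ} {n m : ℕ} (h1 : j ≤ i) (h2 : i + n ≤ j + m) :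
    wordAt x i n <:+: wordAt x j m := by
  set a : ℕ := (i - j).toNat with ha
  have hja : j + a = i := by omega
  have hm : m = a + n + (m - a - n) := by omega
  refine ⟨wordAt x j a, wordAt x (i + n) (m - a - n), ?_⟩
  conv_rhs => rw [hm]
  rw [wordAt_add, wordAt_add, hja]
  have : j + ((a + n : ℕ) : ℤ) = i + ↑n := by push_cast; omega
  rw [this]

lemma finite_len [Finite A] (n : ℕ) : {l : List A | l.length = n}.Finite := by
  apply Set.Finite.subset (Set.finite_range (fun f : Fin n → A => List.ofFn f))
  intro l hl
  simp only [Set.mem_setOf_eq] at hl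
  subst hl
  exact ⟨l.get, List.ofFn_get l⟩

lemma ncard_prod' {α β : Type*} (s : Set α) (t : Set β) :
    (s ×ˢ t).ncard = s.ncard * t.ncard := by
  rw [← Nat.card_coe_set_eq, ← Nat.card_coe_set_eq, ← Nat.card_coe_set_eq,
    Nat.card_congr (Equiv.Set.prod s t), Nat.card_prod]


section
set_option linter.unusedSectionVars false

variable [Fintype A] {S : Set (List A)}

/-- Right-∞-extendable words of `S`. -/
def RS (S : Set (List A)) : Set (List A) :=
  {z | z ∈ S ∧ ∀ m : ℕ, ∃ v : List A, v.length = m ∧ z ++ v ∈ S}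

/-- Left-∞-extendable (within `RS`) words. -/
def LRS (S : Set (List A)) : Set (List A) :=
  {z | ∀ k : ℕ, ∃ u : List A, u.length = k ∧ u ++ z ∈ RS S}

variable (hS : ∀ w ∈ S, ∀ v, v <:+: w → v ∈ S)

include hS

lemma prefix_mem {w v : List A} (hw : w ∈ S) (h : v <+: w) : v ∈ S := hS _ hw _ h.isInfix

lemma suffix_mem {w v : List A} (hw : w ∈ S) (h : v <:+ w) : v ∈ S := hS _ hw _ h.isInfix

lemma RS_subset : RS S ⊆ S := fun _ hz => hz.1

omit hS in
lemma suffix_append_right {s z : List A} (h : s <:+ z) (v : List A) : s ++ v <:+ z ++ v := by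
  obtain ⟨t, rfl⟩ := h
  exact ⟨t, (List.append_assoc _ _ _).symm⟩

lemma RS_suffix {z s : List A} (hz : z ∈ RS S) (h : s <:+ z) : s ∈ RS S := by
  refine ⟨suffix_mem hS hz.1 h, fun m => ?_⟩
  obtain ⟨v, hvl, hvS⟩ := hz.2 m
  exact ⟨v, hvl, suffix_mem hS hvS (suffix_append_right h v)⟩

lemma RS_prefix {z p : List A} (hz : z ∈ RS S) (h : p <+: z) : p ∈ RS S := by
  obtain ⟨t, rfl⟩ := h
  refine ⟨prefix_mem hS hz.1 ⟨t, rfl⟩, fun m => ?_⟩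
  obtain ⟨v, hvl, hvS⟩ := hz.2 m
  refine ⟨(t ++ v).take m,
    by rw [List.length_take, List.length_append, hvl]; exact min_eq_left (by omega), ?_⟩
  apply prefix_mem hS hvS
  refine ⟨(t ++ v).drop m, ?_⟩
  rw [List.append_assoc, List.take_append_drop, List.append_assoc]

lemma RS_step {z : List A} (hz : z ∈ RS S) : ∃ a : A, z ++ [a] ∈ RS S := by
  have hv : ∀ m : ℕ, ∃ v : List A, v.length = m + 1 ∧ z ++ v ∈ S := fun m => hz.2 (m + 1)
  choose v hvl hvS using hv
  have hvne : ∀ m, v m ≠ [] := fun m => List.ne_nil_of_length_pos (by rw [hvl m]; omega)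
  obtain ⟨a, ha⟩ := Finite.exists_infinite_fiber (fun m => (v m).head (hvne m))
  refine ⟨a, ?_⟩
  have key : ∀ m : ℕ, ∃ t : List A, t.length = m ∧ z ++ [a] ++ t ∈ S := by
    intro m
    obtain ⟨m', hm'mem, hm'⟩ := (Set.infinite_coe_iff.mp ha).exists_gt m
    simp only [Set.mem_preimage, Set.mem_singleton_iff] at hm'mem
    have hcons : (v m').head (hvne m') :: (v m').tail = v m' := List.cons_head_tail _
    rw [hm'mem] at hcons
    refine ⟨(v m').tail.take m, ?_, ?_⟩
    · rw [List.length_take, List.length_tail, hvl]; exact min_eq_left (by omega)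
    · apply prefix_mem hS (hvS m')
      refine ⟨(v m').tail.drop m, ?_⟩
      simp only [List.append_assoc]
      rw [List.take_append_drop, List.singleton_append, hcons]
  obtain ⟨t0, ht0l, ht0S⟩ := key 0
  have hz' : z ++ [a] ∈ S := by
    rw [List.length_eq_zero_iff] at ht0l
    simpa [ht0l] using ht0S
  exact ⟨hz', fun m => ⟨(key m).choose, (key m).choose_spec.1, (key m).choose_spec.2⟩⟩

lemma LRS_mem_RS {z : List A} (hz : z ∈ LRS S) : z ∈ RS S := by
  obtain ⟨u, hul, huR⟩ := hz 0
  rw [List.length_eq_zero_iff] at hul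
  simpa [hul] using huR

lemma LRS_step {z : List A} (hz : z ∈ LRS S) : ∃ a : A, a :: z ∈ LRS S := by
  have hu : ∀ k : ℕ, ∃ u : List A, u.length = k + 1 ∧ u ++ z ∈ RS S := fun k => hz (k + 1)
  choose u hul huR using hu
  have hune : ∀ k, u k ≠ [] := fun k => List.ne_nil_of_length_pos (by rw [hul k]; omega)
  obtain ⟨a, ha⟩ := Finite.exists_infinite_fiber (fun k => (u k).getLast (hune k))
  refine ⟨a, fun k => ?_⟩
  obtain ⟨k', hk'mem, hk'⟩ := (Set.infinite_coe_iff.mp ha).exists_gt k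
  simp only [Set.mem_preimage, Set.mem_singleton_iff] at hk'mem
  have hsplit : (u k').dropLast ++ [a] = u k' := by
    rw [← hk'mem]; exact List.dropLast_append_getLast (hune k')
  have hlen : (u k').dropLast.length = k' := by
    simp [List.length_dropLast, hul]
  refine ⟨(u k').dropLast.drop (k' - k), by rw [List.length_drop, hlen]; omega, ?_⟩
  have h2 : (u k').dropLast ++ (a :: z) ∈ RS S := by
    have := huR k'
    rw [← hsplit, List.append_assoc, List.singleton_append] at this
    exact this
  exact RS_suffix hS h2 (suffix_append_right ((u k').dropLast.drop_suffix (k' - k)) (a :: z))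

omit hS in
lemma suffix_chain {W : ℕ → List A} (hsuf : ∀ k, W k <:+ W (k + 1)) :
    ∀ {k k' : ℕ}, k ≤ k' → W k <:+ W k' := by
  intro k k' h
  induction k' with
  | zero => interval_cases k; exact List.suffix_rfl
  | succ m ih =>
    rcases Nat.lt_or_ge k (m + 1) with h1 | h1
    · exact (ih (by omega)).trans (hsuf m)
    · have : k = m + 1 := by omega
      subst this; exact List.suffix_rfl

lemma nested_step {W : ℕ → List A} (hW : ∀ k, W k ∈ RS S) (hsuf : ∀ k, W k <:+ W (k + 1)) :
    ∃ a : A, ∀ k, W k ++ [a] ∈ RS S := by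
  have step : ∀ k, ∃ a : A, W k ++ [a] ∈ RS S := fun k => RS_step hS (hW k)
  choose g hg using step
  obtain ⟨a, ha⟩ := Finite.exists_infinite_fiber g
  refine ⟨a, fun k => ?_⟩
  obtain ⟨k', hk'mem, hk'⟩ := (Set.infinite_coe_iff.mp ha).exists_gt k
  simp only [Set.mem_preimage, Set.mem_singleton_iff] at hk'mem
  have : W k ++ [a] <:+ W k' ++ [a] := suffix_append_right (suffix_chain hsuf (le_of_lt hk')) _
  rw [← hk'mem] at this ⊢
  exact RS_suffix hS (hg k') this

end

section
variable [Fintype A] {S : Set (List A)}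
set_option linter.unusedSectionVars false

variable (hS : ∀ w ∈ S, ∀ v, v <:+: w → v ∈ S)

noncomputable def Xtow (hS : ∀ w ∈ S, ∀ v, v <:+: w → v ∈ S) (w : List A) (hw : w ∈ LRS S) :
    ℕ → {l : List A // l ∈ LRS S}
  | 0 => ⟨w, hw⟩
  | (k+1) => ⟨(LRS_step hS (Xtow hS w hw k).2).choose :: (Xtow hS w hw k).1,
      (LRS_step hS (Xtow hS w hw k).2).choose_spec⟩

variable (w : List A) (hw : w ∈ LRS S)

lemma Xtow_len : ∀ k, (Xtow hS w hw k).1.length = k + w.length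
  | 0 => by simp [Xtow]
  | (k+1) => by rw [Xtow, List.length_cons, Xtow_len k]; omega

lemma Xtow_suffix (k : ℕ) : (Xtow hS w hw k).1 <:+ (Xtow hS w hw (k+1)).1 :=
  ⟨[(LRS_step hS (Xtow hS w hw k).2).choose], rfl⟩

lemma Vtow_step (p : {v : List A // ∀ k, (Xtow hS w hw k).1 ++ v ∈ RS S}) :
    ∃ a : A, ∀ k, (Xtow hS w hw k).1 ++ (p.1 ++ [a]) ∈ RS S := by
  obtain ⟨a, ha⟩ := nested_step hS (fun k => p.2 k)
    (fun k => suffix_append_right (Xtow_suffix hS w hw k) p.1)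
  exact ⟨a, fun k => by rw [← List.append_assoc]; exact ha k⟩

noncomputable def Vtow : ℕ → {v : List A // ∀ k, (Xtow hS w hw k).1 ++ v ∈ RS S}
  | 0 => ⟨[], fun k => by simpa using LRS_mem_RS hS (Xtow hS w hw k).2⟩
  | (q+1) => ⟨(Vtow q).1 ++ [(Vtow_step hS w hw (Vtow q)).choose],
      (Vtow_step hS w hw (Vtow q)).choose_spec⟩

/-- The point through `w`. -/
noncomputable def ypt : ℤ → A := fun i =>
  if hi : i < 0 then (LRS_step hS (Xtow hS w hw (-(i+1)).toNat).2).choose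
  else if h2 : i.toNat < w.length then w.get ⟨i.toNat, h2⟩
  else (Vtow_step hS w hw (Vtow hS w hw (i.toNat - w.length))).choose

lemma ypt_neg {i : ℤ} (hi : i < 0) :
    ypt hS w hw i = (LRS_step hS (Xtow hS w hw (-(i+1)).toNat).2).choose := by
  simp [ypt, hi]

lemma ypt_mid (t : ℕ) (ht : t < w.length) : ypt hS w hw (t : ℤ) = w.get ⟨t, ht⟩ := by
  have h1 : ¬((t : ℤ) < 0) := by omega
  simp [ypt, h1, Int.toNat_natCast, ht]

lemma ypt_right (t : ℕ) (ht : w.length ≤ t) :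
    ypt hS w hw (t : ℤ) = (Vtow_step hS w hw (Vtow hS w hw (t - w.length))).choose := by
  have h1 : ¬((t : ℤ) < 0) := by omega
  have h2 : ¬(t < w.length) := by omega
  simp [ypt, h1, Int.toNat_natCast, h2]

lemma ypt_claim0 : ∀ q : ℕ, wordAt (ypt hS w hw) 0 (w.length + q) = w ++ (Vtow hS w hw q).1
  | 0 => by
    rw [Vtow]
    apply List.ext_getElem (by simp [wordAt_length])
    intro t h1 h2
    rw [wordAt_getElem _ _ _ t (by simpa [wordAt_length] using h1)]
    have h2' : t < w.length := by simpa using h2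
    rw [show (0 : ℤ) + (t : ℤ) = (t : ℤ) by ring, ypt_mid hS w hw t h2']
    simp
  | (q+1) => by
    have h0 : w.length + (q + 1) = (w.length + q) + 1 := by omega
    rw [h0, wordAt_succ_right, ypt_claim0 q, Vtow]
    have he : (0 : ℤ) + ((w.length + q : ℕ) : ℤ) = ((w.length + q : ℕ) : ℤ) := by ring
    rw [he, ypt_right hS w hw (w.length + q) (by omega), Nat.add_sub_cancel_left,
      List.append_assoc]

lemma ypt_claim : ∀ p q : ℕ, wordAt (ypt hS w hw) (-(p : ℤ)) (p + (w.length + q))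
    = (Xtow hS w hw p).1 ++ (Vtow hS w hw q).1
  | 0, q => by
    simp only [Nat.cast_zero, neg_zero, Nat.zero_add, zero_add]
    rw [ypt_claim0 hS w hw q]
    rfl
  | (p+1), q => by
    have h0 : (p + 1) + (w.length + q) = (p + (w.length + q)) + 1 := by omega
    rw [h0, wordAt_succ_left]
    have h1 : -((p + 1 : ℕ) : ℤ) + 1 = -(p : ℤ) := by push_cast; ring
    rw [h1, ypt_claim p q]
    have h2 : (-((p + 1 : ℕ) : ℤ)) < 0 := by omega
    rw [ypt_neg hS w hw h2]
    have h3 : (-(-((p + 1 : ℕ) : ℤ) + 1)).toNat = p := by omega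
    rw [h3]
    rw [Xtow]
    rfl

lemma ypt_spec :
    (∀ k : ℕ, ∃ w' ∈ S, wordAt (ypt hS w hw) (-(k : ℤ)) (2 * k + 1) <:+: w') ∧
      wordAt (ypt hS w hw) 0 w.length = w := by
  constructor
  · intro k
    refine ⟨(Xtow hS w hw k).1 ++ (Vtow hS w hw (k+1)).1, ((Vtow hS w hw (k+1)).2 k).1, ?_⟩
    rw [← ypt_claim hS w hw k (k+1)]
    exact (wordAt_prefix _ _ (by omega)).isInfix
  · have := ypt_claim0 hS w hw 0
    rw [Vtow] at this
    simpa using this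
end

section
variable [Fintype A] {S : Set (List A)}
set_option linter.unusedSectionVars false
set_option maxHeartbeats 1000000

/-- Words of `S` of length `n`. -/
def SnS (S : Set (List A)) (n : ℕ) : Set (List A) := {w ∈ S | w.length = n}

def RnS (S : Set (List A)) (n : ℕ) : Set (List A) := {z ∈ RS S | z.length = n}

def LRnS (S : Set (List A)) (n : ℕ) : Set (List A) := {z ∈ LRS S | z.length = n}

def RkS (S : Set (List A)) (n k : ℕ) : Set (List A) :=
  {z | z ∈ S ∧ z.length = n ∧ ∃ v : List A, v.length = k ∧ z ++ v ∈ S}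

def LRkS (S : Set (List A)) (n k : ℕ) : Set (List A) :=
  {z | z.length = n ∧ ∃ u : List A, u.length = k ∧ u ++ z ∈ RS S}

lemma SnS_finite (n : ℕ) : (SnS S n).Finite := (finite_len n).subset (fun _ h => h.2)
lemma RnS_finite (n : ℕ) : (RnS S n).Finite := (finite_len n).subset (fun _ h => h.2)
lemma LRnS_finite (n : ℕ) : (LRnS S n).Finite := (finite_len n).subset (fun _ h => h.2)
lemma RkS_finite (n k : ℕ) : (RkS S n k).Finite := (finite_len n).subset (fun _ h => h.2.1)
lemma LRkS_finite (n k : ℕ) : (LRkS S n k).Finite := (finite_len n).subset (fun _ h => h.1)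

lemma iInter_RkS (n : ℕ) : (⋂ k, RkS S n k) = RnS S n := by
  ext z
  simp only [Set.mem_iInter, RkS, RnS, RS, Set.mem_setOf_eq, Set.mem_sep_iff]
  constructor
  · intro hz
    exact ⟨⟨(hz 0).1, fun m => (hz m).2.2⟩, (hz 0).2.1⟩
  · rintro ⟨⟨h1, h2⟩, h3⟩ k
    exact ⟨h1, h3, h2 k⟩

lemma iInter_LRkS (n : ℕ) : (⋂ k, LRkS S n k) = LRnS S n := by
  ext z
  simp only [Set.mem_iInter, LRkS, LRnS, LRS, Set.mem_setOf_eq, Set.mem_sep_iff]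
  constructor
  · intro hz
    exact ⟨fun k => (hz k).2, (hz 0).1⟩
  · rintro ⟨h1, h2⟩ k
    exact ⟨h2, h1 k⟩

variable (hS : ∀ w ∈ S, ∀ v, v <:+: w → v ∈ S)
include hS

lemma RkS_antitone (n k : ℕ) : RkS S n (k + 1) ⊆ RkS S n k := by
  rintro z ⟨h1, h2, v, hvl, hvS⟩
  refine ⟨h1, h2, v.take k, by rw [List.length_take, hvl]; exact min_eq_left (by omega), ?_⟩
  apply prefix_mem hS hvS
  exact ⟨v.drop k, by rw [List.append_assoc, List.take_append_drop]⟩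

lemma LRkS_antitone (n k : ℕ) : LRkS S n (k + 1) ⊆ LRkS S n k := by
  rintro z ⟨h1, u, hul, huR⟩
  refine ⟨h1, u.drop 1, by rw [List.length_drop, hul]; omega, ?_⟩
  exact RS_suffix hS huR (suffix_append_right (u.drop_suffix 1) z)

omit hS in
lemma stabilize {T : ℕ → Set (List A)} (hmono : ∀ k, T (k + 1) ⊆ T k) (hfin : (T 0).Finite) :
    ∃ K : ℕ, ∀ k, K ≤ k → T k = ⋂ j, T j := by
  have hant : Antitone T := antitone_nat_of_succ_le hmono
  obtain ⟨K, hK⟩ : ∃ K, (T K).ncard = sInf (Set.range fun k => (T k).ncard) := by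
    have := Nat.sInf_mem (Set.range_nonempty (fun k => (T k).ncard))
    obtain ⟨K, hK⟩ := this
    exact ⟨K, hK⟩
  have heq : ∀ k, K ≤ k → T k = T K := by
    intro k hk
    exact Set.eq_of_subset_of_ncard_le (hant hk)
      (by rw [hK]; exact Nat.sInf_le ⟨k, rfl⟩) (hfin.subset (hant (Nat.zero_le K)))
  have hTK : T K = ⋂ j, T j := by
    apply Set.Subset.antisymm
    · apply Set.subset_iInter
      intro j
      rcases le_total j K with hj | hj
      · exact hant hj
      · rw [heq j hj]
    · exact Set.iInter_subset _ K
  exact ⟨K, fun k hk => (heq k hk).trans hTK⟩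

lemma count0 (m n : ℕ) : (SnS S (m + n)).ncard ≤ (SnS S m).ncard * (SnS S n).ncard := by
  rw [← ncard_prod']
  refine Set.ncard_le_ncard_of_injOn (fun z => (z.take m, z.drop m)) ?_ ?_
    ((SnS_finite m).prod (SnS_finite n))
  · rintro z ⟨hzS, hzl⟩
    constructor
    · exact ⟨prefix_mem hS hzS (z.take_prefix m), by rw [List.length_take, hzl]; omega⟩
    · exact ⟨suffix_mem hS hzS (z.drop_suffix m), by rw [List.length_drop, hzl]; omega⟩
  · intro a _ b _ hab
    have h1 : a.take m = b.take m := congrArg Prod.fst hab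
    have h2 : a.drop m = b.drop m := congrArg Prod.snd hab
    rw [← List.take_append_drop m a, h1, h2, List.take_append_drop]

lemma count1 (n k : ℕ) : (SnS S (n + k)).ncard ≤ (RkS S n k).ncard * (SnS S k).ncard := by
  rw [← ncard_prod']
  refine Set.ncard_le_ncard_of_injOn (fun z => (z.take n, z.drop n)) ?_ ?_
    ((RkS_finite n k).prod (SnS_finite k))
  · rintro z ⟨hzS, hzl⟩
    constructor
    · refine ⟨prefix_mem hS hzS (z.take_prefix n), by rw [List.length_take, hzl]; omega,
        z.drop n, by rw [List.length_drop, hzl]; omega, ?_⟩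
      rw [List.take_append_drop]; exact hzS
    · exact ⟨suffix_mem hS hzS (z.drop_suffix n), by rw [List.length_drop, hzl]; omega⟩
  · intro a _ b _ hab
    have h1 : a.take n = b.take n := congrArg Prod.fst hab
    have h2 : a.drop n = b.drop n := congrArg Prod.snd hab
    rw [← List.take_append_drop n a, h1, h2, List.take_append_drop]

lemma count2 (n k : ℕ) : (RnS S (n + k)).ncard ≤ (LRkS S n k).ncard * (RnS S k).ncard := by
  rw [← ncard_prod']
  refine Set.ncard_le_ncard_of_injOn (fun z => (z.drop k, z.take k)) ?_ ?_
    ((LRkS_finite n k).prod (RnS_finite k))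
  · rintro z ⟨hzR, hzl⟩
    constructor
    · refine ⟨by rw [List.length_drop, hzl]; omega, z.take k, by rw [List.length_take, hzl]; omega, ?_⟩
      rw [List.take_append_drop]; exact hzR
    · exact ⟨RS_prefix hS hzR (z.take_prefix k), by rw [List.length_take, hzl]; omega⟩
  · intro a ha b hb hab
    have h1 : a.drop k = b.drop k := congrArg Prod.fst hab
    have h2 : a.take k = b.take k := congrArg Prod.snd hab
    rw [← List.take_append_drop k a, h1, h2, List.take_append_drop]

variable (hU : ∀ N : ℕ, ∃ w ∈ S, N ≤ w.length)
include hU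

lemma SnS_nonempty (n : ℕ) : (SnS S n).Nonempty := by
  obtain ⟨w, hwS, hwl⟩ := hU n
  exact ⟨w.take n, prefix_mem hS hwS (w.take_prefix n),
    by rw [List.length_take]; exact min_eq_left hwl⟩

lemma RS_nonempty_len : ∀ n : ℕ, ∃ z ∈ RS S, z.length = n := by
  intro n
  induction n with
  | zero =>
    refine ⟨[], ⟨?_, fun m => ?_⟩, rfl⟩
    · obtain ⟨z, hz, hzl⟩ := SnS_nonempty hS hU 0
      rw [List.length_eq_zero_iff] at hzl
      rwa [hzl] at hz
    · obtain ⟨z, hz, hzl⟩ := SnS_nonempty hS hU m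
      exact ⟨z, hzl, by simpa using hz⟩
  | succ m ih =>
    obtain ⟨z, hz, hzl⟩ := ih
    obtain ⟨a, ha⟩ := RS_step hS hz
    exact ⟨z ++ [a], ha, by simp [hzl]⟩

lemma LRS_nonempty_len : ∀ n : ℕ, ∃ z ∈ LRS S, z.length = n := by
  intro n
  induction n with
  | zero =>
    refine ⟨[], fun k => ?_, rfl⟩
    obtain ⟨z, hz, hzl⟩ := RS_nonempty_len hS hU k
    exact ⟨z, hzl, by simpa using hz⟩
  | succ m ih =>
    obtain ⟨z, hz, hzl⟩ := ih
    obtain ⟨a, ha⟩ := LRS_step hS hz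
    exact ⟨a :: z, ha, by simp [hzl]⟩

omit hS hU in
lemma ap_lemma {ε : ℝ} (hε : 0 < ε) (φ : ℕ → ℝ) (hφ : ∀ m : ℕ, ε * m ≤ φ m) (n K : ℕ)
    (hn : 1 ≤ n) : ∃ k, K ≤ k ∧ φ k ≤ φ (n + k) := by
  by_contra hcon
  push_neg at hcon
  have key : ∀ j : ℕ, φ (K + j * n) ≤ φ K := by
    intro j
    induction j with
    | zero => simp
    | succ m ih =>
      have h1 : K ≤ K + m * n := by omega
      have h2 := hcon (K + m * n) h1
      have harg : K + (m + 1) * n = n + (K + m * n) := by ring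
      rw [harg]
      linarith
  obtain ⟨j, hj⟩ := exists_nat_gt (φ K / ε)
  have h2 := hφ (K + j * n)
  have h3 : (j : ℝ) ≤ ((K + j * n : ℕ) : ℝ) := by
    have : j ≤ K + j * n := by nlinarith
    exact_mod_cast this
  have h4 : φ K < ε * j := by
    rw [div_lt_iff₀ hε] at hj
    linarith [hj]
  have h5 : ε * (j : ℝ) ≤ ε * ((K + j * n : ℕ) : ℝ) := by
    exact mul_le_mul_of_nonneg_left h3 hε.le
  have h6 := key j
  linarith

end
end Stmt4Aux

section StmtFour
open Stmt4Aux

variable [Fintype A]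

theorem stmt4_aux (S : Set (List A))
    (hS : ∀ w ∈ S, ∀ v, v <:+: w → v ∈ S) :
    Filter.limsup (fun n : ℕ => Real.log (({w ∈ S | w.length = n} : Set (List A)).ncard) / n)
        Filter.atTop
      = Filter.limsup (fun n : ℕ => Real.log
          ((language {y : ℤ → A | ∀ k : ℕ, ∃ w ∈ S, wordAt y (-(k : ℤ)) (2 * k + 1) <:+: w}
            n).ncard) / n) Filter.atTop := by
  classical
  set Y : Set (ℤ → A) := {y | ∀ k : ℕ, ∃ w ∈ S, wordAt y (-(k : ℤ)) (2 * k + 1) <:+: w}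
    with hYdef
  by_cases hU : ∀ N : ℕ, ∃ w ∈ S, N ≤ w.length
  · -- unbounded case
    have hcpos : ∀ n, 0 < (SnS S n).ncard :=
      fun n => (Set.ncard_pos (SnS_finite n)).mpr (SnS_nonempty hS hU n)
    set u : ℕ → ℝ := fun n => Real.log ((SnS S n).ncard) with hudef
    have hunonneg : ∀ n, 0 ≤ u n := fun n => Real.log_nonneg (by exact_mod_cast hcpos n)
    have hsub : Subadditive u := by
      intro m n
      have h1 : (((SnS S (m + n)).ncard : ℝ)) ≤ ((SnS S m).ncard : ℝ) * ((SnS S n).ncard : ℝ) := by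
        exact_mod_cast count0 hS m n
      have h2 : Real.log ((SnS S (m + n)).ncard)
          ≤ Real.log (((SnS S m).ncard : ℝ) * ((SnS S n).ncard : ℝ)) :=
        Real.log_le_log (by exact_mod_cast hcpos (m + n)) h1
      rwa [Real.log_mul (by exact_mod_cast (hcpos m).ne') (by exact_mod_cast (hcpos n).ne')] at h2
    have hbdd : BddBelow (Set.range fun n : ℕ => u n / n) := by
      refine ⟨0, ?_⟩
      rintro x ⟨n, rfl⟩
      exact div_nonneg (hunonneg n) (Nat.cast_nonneg n)
    set h : ℝ := hsub.lim with hhdef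
    have htendsto := hsub.tendsto_lim hbdd
    have hLHSlim : Filter.limsup (fun n : ℕ => u n / n) Filter.atTop = h := htendsto.limsup_eq
    have hle : ∀ n : ℕ, h * n ≤ u n := by
      intro n
      rcases Nat.eq_zero_or_pos n with rfl | hn
      · simp only [Nat.cast_zero, mul_zero]; exact hunonneg 0
      · have h1 := hsub.lim_le_div hbdd (n := n) (by omega)
        rw [le_div_iff₀ (by exact_mod_cast hn)] at h1
        linarith
    -- step A : growth of RnS
    have hrpos : ∀ n, 0 < (RnS S n).ncard := by
      intro n
      obtain ⟨z, h1, h2⟩ := RS_nonempty_len hS hU n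
      exact (Set.ncard_pos (RnS_finite n)).mpr ⟨z, h1, h2⟩
    have hstepA : ∀ n : ℕ, 1 ≤ n → ∀ ε : ℝ, 0 < ε →
        (h - ε) * n ≤ Real.log ((RnS S n).ncard) := by
      intro n hn ε hε
      obtain ⟨K, hK⟩ := stabilize (T := fun k => RkS S n k) (RkS_antitone hS n) (RkS_finite n 0)
      obtain ⟨k, hkK, hkineq⟩ := ap_lemma hε (fun k => u k - (h - ε) * k)
        (fun m => by
          have h9 := hle m
          show ε * (m : ℝ) ≤ u m - (h - ε) * m
          linarith) n K hn
      have h2 : ((SnS S (n + k)).ncard : ℝ) ≤ ((RnS S n).ncard : ℝ) * ((SnS S k).ncard : ℝ) := by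
        have h3 := count1 hS n k
        rw [hK k hkK, iInter_RkS] at h3
        exact_mod_cast h3
      have hineq : (h - ε) * n ≤ u (n + k) - u k := by
        have hcast : ((n + k : ℕ) : ℝ) = (n : ℝ) + k := by push_cast; ring
        rw [hcast] at hkineq
        nlinarith
      have h3 : u (n + k) ≤ Real.log ((RnS S n).ncard) + u k := by
        calc u (n + k) ≤ Real.log (((RnS S n).ncard : ℝ) * ((SnS S k).ncard : ℝ)) :=
              Real.log_le_log (by exact_mod_cast hcpos (n + k)) h2
          _ = Real.log ((RnS S n).ncard) + Real.log ((SnS S k).ncard) :=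
              Real.log_mul (by exact_mod_cast (hrpos n).ne') (by exact_mod_cast (hcpos k).ne')
      linarith
    have hstepA' : ∀ n : ℕ, h * n ≤ Real.log ((RnS S n).ncard) := by
      intro n
      rcases Nat.eq_zero_or_pos n with rfl | hn
      · simp only [Nat.cast_zero, mul_zero]
        exact Real.log_nonneg (by exact_mod_cast hrpos 0)
      · by_contra hcon
        push_neg at hcon
        set δ : ℝ := h * n - Real.log ((RnS S n).ncard) with hδ
        have hδpos : 0 < δ := by simp only [hδ]; linarith
        have hmain := hstepA n hn (δ / (2 * n)) (by positivity)
        have hne : (n : ℝ) ≠ 0 := by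
          have : (0:ℝ) < n := by exact_mod_cast hn
          linarith
        have he2 : (h - δ / (2 * n)) * n = h * n - δ / 2 := by field_simp
        rw [he2] at hmain
        rw [hδ] at hmain
        linarith
    -- step B : growth of LRnS
    have hlrpos : ∀ n, 0 < (LRnS S n).ncard := by
      intro n
      obtain ⟨z, h1, h2⟩ := LRS_nonempty_len hS hU n
      exact (Set.ncard_pos (LRnS_finite n)).mpr ⟨z, h1, h2⟩
    have hstepB : ∀ n : ℕ, 1 ≤ n → ∀ ε : ℝ, 0 < ε →
        (h - ε) * n ≤ Real.log ((LRnS S n).ncard) := by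
      intro n hn ε hε
      obtain ⟨K, hK⟩ := stabilize (T := fun k => LRkS S n k) (LRkS_antitone hS n)
        (LRkS_finite n 0)
      obtain ⟨k, hkK, hkineq⟩ := ap_lemma hε (fun k => Real.log ((RnS S k).ncard) - (h - ε) * k)
        (fun m => by
          have h9 := hstepA' m
          show ε * (m : ℝ) ≤ Real.log ((RnS S m).ncard) - (h - ε) * m
          linarith) n K hn
      have h2 : ((RnS S (n + k)).ncard : ℝ)
          ≤ ((LRnS S n).ncard : ℝ) * ((RnS S k).ncard : ℝ) := by
        have h3 := count2 hS n k
        rw [hK k hkK, iInter_LRkS] at h3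
        exact_mod_cast h3
      have hineq : (h - ε) * n
          ≤ Real.log ((RnS S (n + k)).ncard) - Real.log ((RnS S k).ncard) := by
        have hcast : ((n + k : ℕ) : ℝ) = (n : ℝ) + k := by push_cast; ring
        rw [hcast] at hkineq
        nlinarith
      have h3 : Real.log ((RnS S (n + k)).ncard)
          ≤ Real.log ((LRnS S n).ncard) + Real.log ((RnS S k).ncard) := by
        calc Real.log ((RnS S (n + k)).ncard)
            ≤ Real.log (((LRnS S n).ncard : ℝ) * ((RnS S k).ncard : ℝ)) :=
              Real.log_le_log (by exact_mod_cast hrpos (n + k)) h2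
          _ = Real.log ((LRnS S n).ncard) + Real.log ((RnS S k).ncard) :=
              Real.log_mul (by exact_mod_cast (hlrpos n).ne') (by exact_mod_cast (hrpos k).ne')
      linarith
    have hstepB' : ∀ n : ℕ, h * n ≤ Real.log ((LRnS S n).ncard) := by
      intro n
      rcases Nat.eq_zero_or_pos n with rfl | hn
      · simp only [Nat.cast_zero, mul_zero]
        exact Real.log_nonneg (by exact_mod_cast hlrpos 0)
      · by_contra hcon
        push_neg at hcon
        set δ : ℝ := h * n - Real.log ((LRnS S n).ncard) with hδ
        have hδpos : 0 < δ := by simp only [hδ]; linarith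
        have hmain := hstepB n hn (δ / (2 * n)) (by positivity)
        have hne : (n : ℝ) ≠ 0 := by
          have : (0:ℝ) < n := by exact_mod_cast hn
          linarith
        have he2 : (h - δ / (2 * n)) * n = h * n - δ / 2 := by field_simp
        rw [he2] at hmain
        rw [hδ] at hmain
        linarith
    -- language comparisons
    have hlang_sub : ∀ n, language Y n ⊆ SnS S n := by
      rintro n w' ⟨x, hx, i, rfl⟩
      have hx' : ∀ k : ℕ, ∃ w ∈ S, wordAt x (-(k : ℤ)) (2 * k + 1) <:+: w := hx
      have hna1 : -|i| ≤ i := neg_abs_le i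
      have hna2 : i ≤ |i| := le_abs_self i
      have hk1 : -(((i.natAbs + n : ℕ) : ℤ)) ≤ i := by
        push_cast
        have : (0:ℤ) ≤ (n:ℤ) := Int.ofNat_nonneg n
        linarith
      have hk2 : i + (n : ℤ)
          ≤ -(((i.natAbs + n : ℕ) : ℤ)) + ((2 * (i.natAbs + n) + 1 : ℕ) : ℤ) := by
        push_cast; linarith
      have hfix := wordAt_infix x hk1 hk2
      obtain ⟨w'', hw''S, hinf⟩ := hx' (i.natAbs + n)
      exact ⟨hS _ hw''S _ (hfix.trans hinf), wordAt_length _ _ _⟩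
    have hlang_fin : ∀ n, (language Y n).Finite :=
      fun n => (SnS_finite n).subset (hlang_sub n)
    have hlang_sup : ∀ n, LRnS S n ⊆ language Y n := by
      rintro n z ⟨hz, hzl⟩
      obtain ⟨hwind, hcent⟩ := ypt_spec hS z hz
      refine ⟨ypt hS z hz, hwind, 0, ?_⟩
      rw [← hzl]
      exact hcent
    -- limsup juggling
    set t : ℕ → ℝ := fun n => Real.log ((language Y n).ncard) / n with htdef
    have htnonneg : ∀ n, 0 ≤ t n := by
      intro n
      apply div_nonneg _ (Nat.cast_nonneg n)
      rcases Nat.eq_zero_or_pos ((language Y n).ncard) with hz | hz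
      · rw [hz]; simp
      · exact Real.log_nonneg (by exact_mod_cast hz)
    have ht_le : ∀ n, t n ≤ u n / n := by
      intro n
      have hlog : Real.log ((language Y n).ncard) ≤ u n := by
        rcases Nat.eq_zero_or_pos ((language Y n).ncard) with hz | hz
        · rw [hz]; simpa using hunonneg n
        · exact Real.log_le_log (by exact_mod_cast hz)
            (by exact_mod_cast Set.ncard_le_ncard (hlang_sub n) (SnS_finite n))
      rcases Nat.eq_zero_or_pos n with rfl | hn
      · simp [htdef]
      · have hnpos : (0:ℝ) < n := by exact_mod_cast hn
        exact div_le_div_of_nonneg_right hlog hnpos.le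
    have ht_ge : ∀ n, 1 ≤ n → h ≤ t n := by
      intro n hn
      have h1 : (LRnS S n).ncard ≤ (language Y n).ncard :=
        Set.ncard_le_ncard (hlang_sup n) (hlang_fin n)
      have h2 : Real.log ((LRnS S n).ncard) ≤ Real.log ((language Y n).ncard) :=
        Real.log_le_log (by exact_mod_cast hlrpos n) (by exact_mod_cast h1)
      have h3 := hstepB' n
      have hnpos : (0:ℝ) < n := by exact_mod_cast hn
      rw [le_div_iff₀ hnpos]
      linarith
    have hgoal1 : Filter.limsup t Filter.atTop = h := by
      apply le_antisymm
      · rw [← hLHSlim]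
        exact Filter.limsup_le_limsup (Filter.Eventually.of_forall ht_le)
          (Filter.isCoboundedUnder_le_of_le Filter.atTop htnonneg)
          htendsto.isBoundedUnder_le
      · apply Filter.le_limsup_of_frequently_le
        · exact (Filter.eventually_atTop.mpr ⟨1, fun n hn => ht_ge n hn⟩).frequently
        · exact htendsto.isBoundedUnder_le.mono_le (Filter.Eventually.of_forall ht_le)
    calc Filter.limsup (fun n : ℕ => Real.log (({w ∈ S | w.length = n} : Set (List A)).ncard) / n)
          Filter.atTop
        = Filter.limsup (fun n : ℕ => u n / n) Filter.atTop := rfl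
      _ = h := hLHSlim
      _ = Filter.limsup t Filter.atTop := hgoal1.symm
      _ = _ := rfl
  · -- bounded case
    push_neg at hU
    obtain ⟨N, hN⟩ := hU
    have hYe : Y = ∅ := by
      ext y
      simp only [Set.mem_empty_iff_false, iff_false]
      intro hy
      have hy' : ∀ k : ℕ, ∃ w ∈ S, wordAt y (-(k : ℤ)) (2 * k + 1) <:+: w := hy
      obtain ⟨w, hwS, hinf⟩ := hy' N
      have h1 := hinf.length_le
      rw [wordAt_length] at h1
      have h2 := hN w hwS
      omega
    have hlang : ∀ n, language Y n = ∅ := by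
      intro n
      ext w'
      simp only [language, Set.mem_setOf_eq, Set.mem_empty_iff_false, iff_false]
      rintro ⟨x, hx, -⟩
      rw [hYe] at hx
      exact hx
    have hLHS : (fun n : ℕ => Real.log (({w ∈ S | w.length = n} : Set (List A)).ncard) / n)
        =ᶠ[Filter.atTop] (fun _ => (0 : ℝ)) := by
      filter_upwards [Filter.eventually_ge_atTop N] with n hn
      have hemp : ({w ∈ S | w.length = n} : Set (List A)) = ∅ := by
        ext w
        simp only [Set.mem_setOf_eq, Set.mem_empty_iff_false, iff_false, not_and]
        intro hwS hwl
        have := hN w hwS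
        omega
      rw [hemp, Set.ncard_empty]
      simp
    have hRHS : (fun n : ℕ => Real.log ((language Y n).ncard) / n)
        =ᶠ[Filter.atTop] (fun _ => (0 : ℝ)) := by
      apply Filter.Eventually.of_forall
      intro n
      show Real.log ((language Y n).ncard) / n = 0
      rw [hlang n, Set.ncard_empty]
      simp
    rw [Filter.limsup_congr hLHS, Filter.limsup_congr hRHS]

end StmtFour

/-- for `S` closed under subwords,
`limsup (1/n) log |S_n| = h(Y(S))`. -/


theorem stmt4 [Fintype A] (S : Set (List A))
    (hS : ∀ w ∈ S, ∀ v, v <:+: w → v ∈ S) :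
    Filter.limsup (fun n : ℕ => Real.log (({w ∈ S | w.length = n} : Set (List A)).ncard) / n)
        Filter.atTop
      = entropy {y : ℤ → A | ∀ k : ℕ, ∃ w ∈ S, wordAt y (-(k : ℤ)) (2 * k + 1) <:+: w} :=
  stmt4_aux S hS
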